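/- (Full-rank case: vanishing of correction terms and uniqueness.) Suppose the pure state |φ⟩_{AR} = φ_R^{1/2}|Φ_{A:R}⟩ achieving the minimum in the channel entropy of a thermal quantum channel T has full-rank reduced matrix φ_R. Then in the canonical form of the Choi matrix J(T) = φ_R^{−1/2} exp( −φ_R^{−1/2} [ ∑_j μ_j C^j_{BR} − 1_B⊗(F_R + φ_R log φ_R) − S_{BR} ] φ_R^{−1/2} ) φ_R^{−1/2} + Y_{BR} one necessarily has S_{BR} = 0 and Y_{BR} = 0, and the thermal quantum channel T is the unique optimizer of the maximum channel entropy problem. -/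

import Mathlib

open Matrix BigOperators MeasureTheory
open scoped Kronecker ComplexOrder

noncomputable section

namespace ThermalChannel

/-- Square complex matrices of size `d`. -/
abbrev Mat (d : ℕ) := Matrix (Fin d) (Fin d) ℂ

/-- A density matrix: positive semidefinite with unit trace. -/
def IsDensity {ι : Type*} [Fintype ι] (ρ : Matrix ι ι ℂ) : Prop :=
  ρ.PosSemidef ∧ ρ.trace = 1

/-- The map `L ⊗ id_R` applied to a matrix on `A × R`. -/
def extendId {A B R : Type*} [Fintype A] [Fintype B] [Fintype R]
    (L : Matrix A A ℂ →ₗ[ℂ] Matrix B B ℂ)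
    (M : Matrix (A × R) (A × R) ℂ) : Matrix (B × R) (B × R) ℂ :=
  Matrix.of fun p q => L (Matrix.of fun x y => M (x, p.2) (y, q.2)) p.1 q.1

/-- A quantum channel: a completely positive trace-preserving linear map. -/
def IsChannel {A B : Type*} [Fintype A] [Fintype B]
    (L : Matrix A A ℂ →ₗ[ℂ] Matrix B B ℂ) : Prop :=
  (∀ (k : ℕ) (M : Matrix (A × Fin k) (A × Fin k) ℂ), M.PosSemidef →
    (extendId L M).PosSemidef) ∧
  (∀ M, (L M).trace = M.trace)

/-- The (unnormalized) maximally entangled projector `|Φ⟩⟨Φ|`,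
`|Φ⟩ = ∑ j |j⟩|j⟩`. -/
def PhiMat (A : Type*) [DecidableEq A] : Matrix (A × A) (A × A) ℂ :=
  Matrix.of fun p q => if p.1 = p.2 ∧ q.1 = q.2 then 1 else 0

/-- The Choi matrix `J(L) = (L ⊗ id)(Φ)`. -/
def choi {A B : Type*} [Fintype A] [DecidableEq A] [Fintype B]
    (L : Matrix A A ℂ →ₗ[ℂ] Matrix B B ℂ) : Matrix (B × A) (B × A) ℂ :=
  extendId L (PhiMat A)

/-- Partial trace over the first tensor factor. -/
def ptraceFst {B R : Type*} [Fintype B] (M : Matrix (B × R) (B × R) ℂ) :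
    Matrix R R ℂ :=
  Matrix.of fun x y => ∑ b, M (b, x) (b, y)

/-- Partial trace over the second tensor factor. -/
def ptraceSnd {B R : Type*} [Fintype R] (M : Matrix (B × R) (B × R) ℂ) :
    Matrix B B ℂ :=
  Matrix.of fun x y => ∑ r, M (x, r) (y, r)

open Classical in
/-- Functional calculus for Hermitian matrices (junk value `0` for
non-Hermitian matrices): apply `f` to the eigenvalues. -/
def mfun {ι : Type*} [Fintype ι] [DecidableEq ι] (f : ℝ → ℝ) (M : Matrix ι ι ℂ) :
    Matrix ι ι ℂ :=
  if h : M.IsHermitian then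
    (h.eigenvectorUnitary : Matrix ι ι ℂ) *
      Matrix.diagonal (fun i => (f (h.eigenvalues i) : ℂ)) *
      star (h.eigenvectorUnitary : Matrix ι ι ℂ)
  else 0

/-- Matrix square root (of a positive semidefinite matrix). -/
def msqrt {ι : Type*} [Fintype ι] [DecidableEq ι] (M : Matrix ι ι ℂ) : Matrix ι ι ℂ :=
  mfun Real.sqrt M

open Classical in
/-- Moore–Penrose pseudo-inverse square root of a positive semidefinite matrix. -/
def minvsqrt {ι : Type*} [Fintype ι] [DecidableEq ι] (M : Matrix ι ι ℂ) : Matrix ι ι ℂ :=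
  mfun (fun x => if x = 0 then 0 else (Real.sqrt x)⁻¹) M

open Classical in
/-- Orthogonal projector onto the support. -/
def suppProj {ι : Type*} [Fintype ι] [DecidableEq ι] (M : Matrix ι ι ℂ) : Matrix ι ι ℂ :=
  mfun (fun x => if x = 0 then 0 else 1) M

/-- Matrix logarithm, taken spectrally on the support (`log 0 := 0`). -/
def mlog {ι : Type*} [Fintype ι] [DecidableEq ι] (M : Matrix ι ι ℂ) : Matrix ι ι ℂ :=
  mfun Real.log M

/-- `M log M`, defined spectrally with `0 log 0 := 0`. -/
def xlogx {ι : Type*} [Fintype ι] [DecidableEq ι] (M : Matrix ι ι ℂ) : Matrix ι ι ℂ :=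
  mfun (fun x => x * Real.log x) M

/-- Matrix exponential (of a Hermitian matrix). -/
def mexp {ι : Type*} [Fintype ι] [DecidableEq ι] (M : Matrix ι ι ℂ) : Matrix ι ι ℂ :=
  mfun Real.exp M

open Classical in
/-- Von Neumann entropy `S(ρ) = -∑ λᵢ log λᵢ` (junk value `0` for
non-Hermitian matrices); `0 log 0 := 0` since `Real.log 0 = 0`. -/
def vnEntropy {ι : Type*} [Fintype ι] [DecidableEq ι] (M : Matrix ι ι ℂ) : ℝ :=
  if h : M.IsHermitian then -∑ i, h.eigenvalues i * Real.log (h.eigenvalues i) else 0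

/-- Conditional entropy `S(B|R)_τ = S(τ) - S(tr_B τ)`. -/
def condEntropy {B R : Type*} [Fintype B] [Fintype R] [DecidableEq B] [DecidableEq R]
    (τ : Matrix (B × R) (B × R) ℂ) : ℝ :=
  vnEntropy τ - vnEntropy (ptraceFst τ)

/-- The channel entropy `S(N) = min_{ρ_{AR}} S(B|R)_{(N ⊗ id)(ρ_{AR})}`. -/
def channelEntropy {A B : Type*} [Fintype A] [Fintype B] [DecidableEq A] [DecidableEq B]
    (L : Matrix A A ℂ →ₗ[ℂ] Matrix B B ℂ) : ℝ :=
  sInf {x | ∃ ρ : Matrix (A × A) (A × A) ℂ, IsDensity ρ ∧ x = condEntropy (extendId L ρ)}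

/-- The pure state `|φ⟩⟨φ|` with `|φ⟩ = φ_R^{1/2} |Φ_{A:R}⟩`, the square root
acting on the reference factor `R`. -/
def stateAR {A : Type*} [Fintype A] [DecidableEq A] (φR : Matrix A A ℂ) :
    Matrix (A × A) (A × A) ℂ :=
  ((1 : Matrix A A ℂ) ⊗ₖ msqrt φR) * PhiMat A * ((1 : Matrix A A ℂ) ⊗ₖ msqrt φR)

/-- A channel is feasible if it reproduces the prescribed expectation values
`tr[C^j J(N)] = q_j`. -/
def Feasible {dA dB J : ℕ} (C : Fin J → Matrix (Fin dB × Fin dA) (Fin dB × Fin dA) ℂ)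
    (q : Fin J → ℝ) (L : Mat dA →ₗ[ℂ] Mat dB) : Prop :=
  IsChannel L ∧ ∀ j, (C j * choi L).trace = (q j : ℂ)

/-- A thermal quantum channel: an optimizer of the maximum channel entropy
problem. -/
def IsThermalChannel {dA dB J : ℕ}
    (C : Fin J → Matrix (Fin dB × Fin dA) (Fin dB × Fin dA) ℂ) (q : Fin J → ℝ)
    (T : Mat dA →ₗ[ℂ] Mat dB) : Prop :=
  Feasible C q T ∧ ∀ L, Feasible C q L → channelEntropy L ≤ channelEntropy T


/-- `exp` taken on the subspace determined by the projector `P`. -/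
def expSupp {ι : Type*} [Fintype ι] [DecidableEq ι] (P X : Matrix ι ι ℂ) :
    Matrix ι ι ℂ :=
  mexp X - (1 - P)


section Aux

variable {ι : Type*} [Fintype ι] [DecidableEq ι]

def IsUdiag (V : Matrix ι ι ℂ) (d : ι → ℝ) (M : Matrix ι ι ℂ) : Prop :=
  V ∈ Matrix.unitaryGroup ι ℂ ∧
    M = V * Matrix.diagonal (fun i => (d i : ℂ)) * star V

theorem isUdiag_self {M : Matrix ι ι ℂ} (h : M.IsHermitian) :
    IsUdiag (h.eigenvectorUnitary : Matrix ι ι ℂ) h.eigenvalues M :=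
  ⟨(h.eigenvectorUnitary).2, by exact h.spectral_theorem⟩

theorem udiag_isHermitian {V : Matrix ι ι ℂ} {d : ι → ℝ} {M : Matrix ι ι ℂ}
    (h : IsUdiag V d M) : M.IsHermitian := by
  rw [h.2, star_eq_conjTranspose]
  exact isHermitian_mul_mul_conjTranspose _
    (isHermitian_diagonal_of_self_adjoint _ (by
      ext i; simp [Pi.star_apply, Complex.conj_ofReal]))

theorem udiag_trace {V : Matrix ι ι ℂ} {d : ι → ℝ} {M : Matrix ι ι ℂ}
    (h : IsUdiag V d M) : M.trace = ∑ i, (d i : ℂ) := by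
  rw [h.2, Matrix.trace_mul_comm (V * _) (star V), ← Matrix.mul_assoc,
    Matrix.mem_unitaryGroup_iff'.mp h.1, Matrix.one_mul, Matrix.trace_diagonal]

theorem udiag_mul {V : Matrix ι ι ℂ} {d e : ι → ℝ} {M N : Matrix ι ι ℂ}
    (h1 : IsUdiag V d M) (h2 : IsUdiag V e N) :
    IsUdiag V (fun i => d i * e i) (M * N) := by
  refine ⟨h1.1, ?_⟩
  rw [h1.2, h2.2]
  have h' : star V * V = 1 := Matrix.mem_unitaryGroup_iff'.mp h1.1
  calc V * Matrix.diagonal (fun i => (d i : ℂ)) * star V *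
        (V * Matrix.diagonal (fun i => (e i : ℂ)) * star V)
      = V * Matrix.diagonal (fun i => (d i : ℂ)) * (star V * V) *
        Matrix.diagonal (fun i => (e i : ℂ)) * star V := by
        simp only [Matrix.mul_assoc]
    _ = V * (Matrix.diagonal (fun i => (d i : ℂ)) *
        Matrix.diagonal (fun i => (e i : ℂ))) * star V := by
        rw [h']; simp only [Matrix.mul_assoc, Matrix.one_mul]
    _ = V * Matrix.diagonal (fun i => ((d i * e i : ℝ) : ℂ)) * star V := by
        rw [Matrix.diagonal_mul_diagonal]; push_cast; rfl

theorem udiag_one {V : Matrix ι ι ℂ} {d : ι → ℝ} {M : Matrix ι ι ℂ}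
    (h : IsUdiag V d M) (hd : ∀ i, d i = 1) : M = 1 := by
  rw [h.2]
  have : Matrix.diagonal (fun i => (d i : ℂ)) = 1 := by
    simp [hd, Matrix.diagonal_one]
  rw [this, Matrix.mul_one, Matrix.mem_unitaryGroup_iff.mp h.1]

theorem udiag_isUnit {V : Matrix ι ι ℂ} {d : ι → ℝ} {M : Matrix ι ι ℂ}
    (h : IsUdiag V d M) (hd : ∀ i, d i ≠ 0) : IsUnit M := by
  rw [Matrix.isUnit_iff_isUnit_det, h.2]
  have h1 : V * star V = 1 := Matrix.mem_unitaryGroup_iff.mp h.1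
  rw [Matrix.det_mul, Matrix.det_mul]
  have : V.det * (star V).det = 1 := by
    rw [mul_comm, ← Matrix.det_mul, Matrix.mem_unitaryGroup_iff'.mp h.1, Matrix.det_one]
  rw [mul_comm V.det _, mul_assoc, this, mul_one, Matrix.det_diagonal]
  rw [isUnit_iff_ne_zero]
  exact Finset.prod_ne_zero_iff.mpr fun i _ => by
    simpa using hd i





theorem udiag_key {U V : Matrix ι ι ℂ} {p e : ι → ℝ} {M : Matrix ι ι ℂ}
    (h1 : IsUdiag U p M) (h2 : IsUdiag V e M) :
    ∀ i j, (star U * V) i j ≠ 0 → p i = e j := by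
  have hU : star U * U = 1 := Matrix.mem_unitaryGroup_iff'.mp h1.1
  have hV : star V * V = 1 := Matrix.mem_unitaryGroup_iff'.mp h2.1
  have hmat : Matrix.diagonal (fun i => (p i : ℂ)) * (star U * V) =
      (star U * V) * Matrix.diagonal (fun i => (e i : ℂ)) := by
    have := h1.2.symm.trans h2.2
    calc Matrix.diagonal (fun i => (p i : ℂ)) * (star U * V)
        = star U * (U * Matrix.diagonal (fun i => (p i : ℂ)) * star U) * V := by
          simp only [Matrix.mul_assoc, ← Matrix.mul_assoc (star U) U, hU, Matrix.one_mul]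
      _ = star U * (V * Matrix.diagonal (fun i => (e i : ℂ)) * star V) * V := by rw [this]
      _ = (star U * V) * Matrix.diagonal (fun i => (e i : ℂ)) := by
          simp only [Matrix.mul_assoc, ← Matrix.mul_assoc (star V) V, hV, Matrix.mul_one]
  intro i j hne
  have := Matrix.ext_iff.mpr hmat i j
  rw [Matrix.diagonal_mul, Matrix.mul_diagonal] at this
  have h3 : (p i : ℂ) = (e j : ℂ) := by
    rw [mul_comm ((star U * V) i j) _] at this
    exact mul_right_cancel₀ hne this
  exact_mod_cast h3

theorem udiag_congr {U V : Matrix ι ι ℂ} {c c' : ι → ℝ}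
    (hU : U ∈ Matrix.unitaryGroup ι ℂ) (hV : V ∈ Matrix.unitaryGroup ι ℂ)
    (key : ∀ i j, (star U * V) i j ≠ 0 → c i = c' j) :
    U * Matrix.diagonal (fun i => (c i : ℂ)) * star U =
      V * Matrix.diagonal (fun i => (c' i : ℂ)) * star V := by
  have hUU : U * star U = 1 := Matrix.mem_unitaryGroup_iff.mp hU
  have hVV : V * star V = 1 := Matrix.mem_unitaryGroup_iff.mp hV
  have hmat : Matrix.diagonal (fun i => (c i : ℂ)) * (star U * V) =
      (star U * V) * Matrix.diagonal (fun i => (c' i : ℂ)) := by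
    ext i j
    rw [Matrix.diagonal_mul, Matrix.mul_diagonal]
    by_cases hz : (star U * V) i j = 0
    · rw [hz, mul_zero, zero_mul]
    · rw [key i j hz, mul_comm]
  calc U * Matrix.diagonal (fun i => (c i : ℂ)) * star U
      = U * (Matrix.diagonal (fun i => (c i : ℂ)) * (star U * V)) * star V * U * star U := by
        simp only [Matrix.mul_assoc, ← Matrix.mul_assoc (star V) V, hVV]
        simp only [← Matrix.mul_assoc, Matrix.mul_assoc _ V (star V), hVV,
          Matrix.mul_one, Matrix.mul_assoc _ U (star U), hUU]
    _ = U * ((star U * V) * Matrix.diagonal (fun i => (c' i : ℂ))) * star V * (U * star U) := by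
        rw [hmat]; simp only [Matrix.mul_assoc]
    _ = V * Matrix.diagonal (fun i => (c' i : ℂ)) * star V := by
        rw [hUU, Matrix.mul_one]
        simp only [← Matrix.mul_assoc, Matrix.mul_assoc U (star U) V, hUU]
        simp [Matrix.mul_assoc, hUU]

theorem unitary_row_sum {W : Matrix ι ι ℂ} (hW : W ∈ Matrix.unitaryGroup ι ℂ) (i : ι) :
    ∑ j, Complex.normSq (W i j) = 1 := by
  have h := Matrix.mem_unitaryGroup_iff.mp hW
  have h1 := Matrix.ext_iff.mpr h i i
  rw [Matrix.mul_apply] at h1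
  simp only [Matrix.one_apply_eq] at h1
  have h2 : (((∑ j, Complex.normSq (W i j) : ℝ)) : ℂ) = 1 := by
    push_cast
    rw [← h1]
    refine Finset.sum_congr rfl fun j _ => ?_
    rw [Matrix.star_apply, ← Complex.mul_conj]
    rfl
  exact_mod_cast h2

theorem unitary_col_sum {W : Matrix ι ι ℂ} (hW : W ∈ Matrix.unitaryGroup ι ℂ) (j : ι) :
    ∑ i, Complex.normSq (W i j) = 1 := by
  have h := Matrix.mem_unitaryGroup_iff'.mp hW
  have h1 := Matrix.ext_iff.mpr h j j
  rw [Matrix.mul_apply] at h1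
  simp only [Matrix.one_apply_eq] at h1
  have h2 : (((∑ i, Complex.normSq (W i j) : ℝ)) : ℂ) = 1 := by
    push_cast
    rw [← h1]
    refine Finset.sum_congr rfl fun i _ => ?_
    rw [Matrix.star_apply]
    have : star (W i j) * W i j = W i j * star (W i j) := mul_comm _ _
    rw [this, ← Complex.mul_conj]
    rfl
  exact_mod_cast h2

theorem starU_mul_V_mem {U V : Matrix ι ι ℂ}
    (hU : U ∈ Matrix.unitaryGroup ι ℂ) (hV : V ∈ Matrix.unitaryGroup ι ℂ) :
    star U * V ∈ Matrix.unitaryGroup ι ℂ :=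
  mul_mem (Unitary.star_mem hU) hV

theorem udiag_sum_transfer {U V : Matrix ι ι ℂ} {p e : ι → ℝ}
    (hU : U ∈ Matrix.unitaryGroup ι ℂ) (hV : V ∈ Matrix.unitaryGroup ι ℂ)
    (key : ∀ i j, (star U * V) i j ≠ 0 → p i = e j) (g : ℝ → ℝ) :
    ∑ i, g (p i) = ∑ j, g (e j) := by
  have hW := starU_mul_V_mem hU hV
  calc ∑ i, g (p i) = ∑ i, g (p i) * ∑ j, Complex.normSq ((star U * V) i j) := by
        simp [unitary_row_sum hW]
    _ = ∑ i, ∑ j, g (p i) * Complex.normSq ((star U * V) i j) := by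
        simp [Finset.mul_sum]
    _ = ∑ i, ∑ j, g (e j) * Complex.normSq ((star U * V) i j) := by
        refine Finset.sum_congr rfl fun i _ => Finset.sum_congr rfl fun j _ => ?_
        by_cases hz : (star U * V) i j = 0
        · simp [hz]
        · rw [key i j hz]
    _ = ∑ j, g (e j) * ∑ i, Complex.normSq ((star U * V) i j) := by
        rw [Finset.sum_comm]; simp [Finset.mul_sum]
    _ = ∑ j, g (e j) := by simp [unitary_col_sum hW]





theorem udiag_trace_mul {U V : Matrix ι ι ℂ} {p e : ι → ℝ} {M N : Matrix ι ι ℂ}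
    (h1 : IsUdiag U p M) (h2 : IsUdiag V e N) :
    (M * N).trace =
      ((∑ i, ∑ j, p i * e j * Complex.normSq ((star U * V) i j) : ℝ) : ℂ) := by
  have hUU : U * star U = 1 := Matrix.mem_unitaryGroup_iff.mp h1.1
  have hUU' : star U * U = 1 := Matrix.mem_unitaryGroup_iff'.mp h1.1
  set W := star U * V with hW
  have e1 : M * N = U * (Matrix.diagonal (fun i => (p i : ℂ)) *
      (W * (Matrix.diagonal (fun i => (e i : ℂ)) * star W))) * star U := by
    rw [h1.2, h2.2, hW]
    simp only [Matrix.star_mul, star_star, Matrix.mul_assoc, hUU, Matrix.mul_one]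
  rw [e1, Matrix.trace_mul_comm, ← Matrix.mul_assoc, hUU', Matrix.one_mul]
  rw [Matrix.trace]
  push_cast
  refine Finset.sum_congr rfl fun i _ => ?_
  rw [Matrix.diag_apply, Matrix.diagonal_mul, Matrix.mul_apply, Finset.mul_sum]
  refine Finset.sum_congr rfl fun j _ => ?_
  rw [Matrix.diagonal_mul, Matrix.star_apply]
  have : W i j * star (W i j) = ((Complex.normSq (W i j) : ℝ) : ℂ) :=
    Complex.mul_conj _
  calc (p i : ℂ) * (W i j * ((e j : ℂ) * star (W i j)))
      = (p i : ℂ) * (e j : ℂ) * (W i j * star (W i j)) := by ring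
    _ = (p i : ℂ) * (e j : ℂ) * ((Complex.normSq (W i j) : ℝ) : ℂ) := by rw [this]

theorem klein_scalar {p E : ℝ} (hp : 0 ≤ p) :
    0 ≤ p * Real.log p - p * E - p + Real.exp E ∧
      (p * Real.log p - p * E - p + Real.exp E = 0 → p = Real.exp E) := by
  rcases hp.eq_or_lt with h | h
  · rw [← h]
    constructor
    · simp [Real.exp_pos E |>.le]
    · intro h0
      exfalso
      simp only [Real.log_zero, mul_zero, zero_mul, sub_zero, zero_sub] at h0
      nlinarith [Real.exp_pos E]
  · have hq := Real.exp_pos E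
    have hlog : Real.log (Real.exp E / p) = E - Real.log p := by
      rw [Real.log_div (ne_of_gt hq) (ne_of_gt h), Real.log_exp]
    have hpd : p * (Real.exp E / p) = Real.exp E := by field_simp
    constructor
    · have hkey := Real.log_le_sub_one_of_pos (div_pos hq h)
      rw [hlog] at hkey
      nlinarith [mul_le_mul_of_nonneg_left hkey h.le]
    · intro h0
      by_contra hne
      have hne' : Real.exp E / p ≠ 1 := by
        intro hc
        apply hne
        field_simp at hc
        exact hc.symm
      have hkey := Real.log_lt_sub_one_of_pos (div_pos hq h) hne'
      rw [hlog] at hkey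
      nlinarith [mul_lt_mul_of_pos_left hkey h]


theorem mfun_eq (f : ℝ → ℝ) {M : Matrix ι ι ℂ} (h : M.IsHermitian) :
    mfun f M = (h.eigenvectorUnitary : Matrix ι ι ℂ) *
      Matrix.diagonal (fun i => (f (h.eigenvalues i) : ℂ)) *
      star (h.eigenvectorUnitary : Matrix ι ι ℂ) := by
  rw [mfun, dif_pos h]

theorem mfun_udiag (f : ℝ → ℝ) {M : Matrix ι ι ℂ} (h : M.IsHermitian) :
    IsUdiag (h.eigenvectorUnitary : Matrix ι ι ℂ) (fun i => f (h.eigenvalues i))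
      (mfun f M) :=
  ⟨(h.eigenvectorUnitary).2, mfun_eq f h⟩

theorem vnEntropy_eq {M : Matrix ι ι ℂ} (h : M.IsHermitian) :
    vnEntropy M = -∑ i, h.eigenvalues i * Real.log (h.eigenvalues i) := by
  rw [vnEntropy, dif_pos h]

theorem klein_ineq {ρ X : Matrix ι ι ℂ} (hρ : ρ.PosSemidef) (hρt : ρ.trace = 1)
    (hX : X.IsHermitian) (hσt : (mexp X).trace = 1) :
    vnEntropy ρ ≤ -((ρ * X).trace.re) ∧
      (vnEntropy ρ = -((ρ * X).trace.re) → ρ = mexp X) := by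
  have hH := hρ.1
  set U : Matrix ι ι ℂ := (hH.eigenvectorUnitary : Matrix ι ι ℂ) with hUdef
  set p : ι → ℝ := hH.eigenvalues with hpdef
  set V : Matrix ι ι ℂ := (hX.eigenvectorUnitary : Matrix ι ι ℂ) with hVdef
  set e : ι → ℝ := hX.eigenvalues with hedef
  have hρd : IsUdiag U p ρ := isUdiag_self hH
  have hXd : IsUdiag V e X := isUdiag_self hX
  have hσd : IsUdiag V (fun j => Real.exp (e j)) (mexp X) := mfun_udiag Real.exp hX
  have hWmem := starU_mul_V_mem hρd.1 hXd.1
  set w : ι → ι → ℝ := fun i j => Complex.normSq ((star U * V) i j) with hw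
  have hrow : ∀ i, ∑ j, w i j = 1 := unitary_row_sum hWmem
  have hcol : ∀ j, ∑ i, w i j = 1 := unitary_col_sum hWmem
  have hesum : ∑ j, Real.exp (e j) = 1 := by
    have h2 := (udiag_trace hσd).symm.trans hσt
    push_cast at h2
    exact_mod_cast h2
  have htr : (ρ * X).trace.re = ∑ i, ∑ j, p i * e j * w i j := by
    rw [udiag_trace_mul hρd hXd]
    exact Complex.ofReal_re _
  have hp0 : ∀ i, 0 ≤ p i := hρ.eigenvalues_nonneg
  have hterm : ∀ i j,
      0 ≤ w i j * (p i * Real.log (p i) - p i * e j - p i + Real.exp (e j)) :=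
    fun i j => mul_nonneg (Complex.normSq_nonneg _) (klein_scalar (hp0 i)).1
  have hpsum : ∑ i, p i = 1 := by
    have h2 := (udiag_trace hρd).symm.trans hρt
    push_cast at h2
    exact_mod_cast h2
  have hsum : ∑ i, ∑ j, w i j * (p i * Real.log (p i) - p i * e j - p i + Real.exp (e j))
      = (∑ i, p i * Real.log (p i)) - (ρ * X).trace.re := by
    have inner : ∀ i, ∑ j, w i j * (p i * Real.log (p i) - p i * e j - p i + Real.exp (e j))
        = p i * Real.log (p i) - (∑ j, p i * e j * w i j) - p i
          + ∑ j, w i j * Real.exp (e j) := by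
      intro i
      have : ∀ j, w i j * (p i * Real.log (p i) - p i * e j - p i + Real.exp (e j))
          = w i j * (p i * Real.log (p i)) - p i * e j * w i j - w i j * p i
            + w i j * Real.exp (e j) := fun j => by ring
      rw [Finset.sum_congr rfl fun j _ => this j]
      rw [Finset.sum_add_distrib, Finset.sum_sub_distrib, Finset.sum_sub_distrib,
        ← Finset.sum_mul, ← Finset.sum_mul, hrow i, one_mul, one_mul]
    rw [Finset.sum_congr rfl fun i _ => inner i]
    rw [Finset.sum_add_distrib, Finset.sum_sub_distrib, Finset.sum_sub_distrib]
    rw [show (∑ i : ι, ∑ j : ι, w i j * Real.exp (e j)) = ∑ j : ι, ∑ i : ι, w i j * Real.exp (e j) from Finset.sum_comm]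
    have last : ∑ j, ∑ i, w i j * Real.exp (e j) = 1 := by
      have : ∀ j, ∑ i, w i j * Real.exp (e j) = Real.exp (e j) := by
        intro j; rw [← Finset.sum_mul, hcol j, one_mul]
      rw [Finset.sum_congr rfl fun j _ => this j, hesum]
    rw [last, hpsum, htr]
    ring
  have hnn : 0 ≤ (∑ i, p i * Real.log (p i)) - (ρ * X).trace.re := by
    rw [← hsum]
    exact Finset.sum_nonneg fun i _ => Finset.sum_nonneg fun j _ => hterm i j
  have hvn : vnEntropy ρ = -∑ i, p i * Real.log (p i) := vnEntropy_eq hH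
  constructor
  · rw [hvn]; linarith
  · intro heq
    rw [hvn] at heq
    have hzero : ∑ i, ∑ j, w i j *
        (p i * Real.log (p i) - p i * e j - p i + Real.exp (e j)) = 0 := by
      rw [hsum]; linarith
    have hterm0 : ∀ i j, w i j *
        (p i * Real.log (p i) - p i * e j - p i + Real.exp (e j)) = 0 := by
      have houter := (Finset.sum_eq_zero_iff_of_nonneg fun i _ =>
        Finset.sum_nonneg fun j _ => hterm i j).mp hzero
      intro i j
      have hinner := (Finset.sum_eq_zero_iff_of_nonneg fun j _ => hterm i j).mp
        (houter i (Finset.mem_univ i))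
      exact hinner j (Finset.mem_univ j)
    have key : ∀ i j, (star U * V) i j ≠ 0 → p i = Real.exp (e j) := by
      intro i j hne
      have hwne : w i j ≠ 0 := fun hc => hne (Complex.normSq_eq_zero.mp hc)
      have := (mul_eq_zero.mp (hterm0 i j)).resolve_left hwne
      exact (klein_scalar (hp0 i)).2 this
    rw [hρd.2, hσd.2]
    exact udiag_congr hρd.1 hσd.1 key

theorem vnEntropy_mexp {X : Matrix ι ι ℂ} (hX : X.IsHermitian) :
    vnEntropy (mexp X) = -((mexp X * X).trace.re) := by
  have hσd : IsUdiag (hX.eigenvectorUnitary : Matrix ι ι ℂ)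
      (fun j => Real.exp (hX.eigenvalues j)) (mexp X) := mfun_udiag Real.exp hX
  have hσH : (mexp X).IsHermitian := udiag_isHermitian hσd
  have hXd : IsUdiag (hX.eigenvectorUnitary : Matrix ι ι ℂ) hX.eigenvalues X :=
    isUdiag_self hX
  have h1 : vnEntropy (mexp X) = -∑ i, hσH.eigenvalues i * Real.log (hσH.eigenvalues i) :=
    vnEntropy_eq hσH
  have hkey := udiag_key (isUdiag_self hσH) hσd
  have h2 : ∑ i, hσH.eigenvalues i * Real.log (hσH.eigenvalues i)
      = ∑ j, Real.exp (hX.eigenvalues j) * Real.log (Real.exp (hX.eigenvalues j)) :=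
    udiag_sum_transfer (isUdiag_self hσH).1 hσd.1 hkey (fun x => x * Real.log x)
  have h3 : (mexp X * X).trace = ((∑ j, Real.exp (hX.eigenvalues j) * hX.eigenvalues j : ℝ) : ℂ) := by
    have := udiag_trace (udiag_mul hσd hXd)
    rw [this, Complex.ofReal_sum]
  rw [h1, h2, h3, Complex.ofReal_re]
  congr 1
  refine Finset.sum_congr rfl fun j _ => ?_
  rw [Real.log_exp]

theorem vnEntropy_nonneg {ρ : Matrix ι ι ℂ} (hρ : ρ.PosSemidef) (hρt : ρ.trace = 1) :
    0 ≤ vnEntropy ρ := by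
  have hH := hρ.1
  have hpsum : ∑ i, hH.eigenvalues i = 1 := by
    have h2 := (udiag_trace (isUdiag_self hH)).symm.trans hρt
    push_cast at h2
    exact_mod_cast h2
  rw [vnEntropy_eq hH]
  rw [neg_nonneg]
  refine Finset.sum_nonpos fun i _ => ?_
  have h0 := hρ.eigenvalues_nonneg i
  have h1 : hH.eigenvalues i ≤ 1 := by
    rw [← hpsum]
    exact Finset.single_le_sum (fun j _ => hρ.eigenvalues_nonneg j) (Finset.mem_univ i)
  exact mul_nonpos_of_nonneg_of_nonpos h0 (Real.log_nonpos h0 h1)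

theorem vnEntropy_le_log {ρ : Matrix ι ι ℂ} (hρ : ρ.PosSemidef) (hρt : ρ.trace = 1) :
    vnEntropy ρ ≤ Real.log (Fintype.card ι) := by
  have hH := hρ.1
  have hpsum : ∑ i, hH.eigenvalues i = 1 := by
    have h2 := (udiag_trace (isUdiag_self hH)).symm.trans hρt
    push_cast at h2
    exact_mod_cast h2
  have hcard : (0 : ℝ) < Fintype.card ι := by
    rcases Nat.eq_zero_or_pos (Fintype.card ι) with h | h
    · exfalso
      have : IsEmpty ι := Fintype.card_eq_zero_iff.mp h
      rw [Finset.univ_eq_empty, Finset.sum_empty] at hpsum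
      exact zero_ne_one hpsum
    · exact_mod_cast h
  set c : ℝ := (Fintype.card ι : ℝ) with hc
  have hterm : ∀ i, 0 ≤ hH.eigenvalues i * Real.log (hH.eigenvalues i)
      - hH.eigenvalues i * Real.log c⁻¹ - hH.eigenvalues i + Real.exp (Real.log c⁻¹) :=
    fun i => (klein_scalar (hρ.eigenvalues_nonneg i)).1
  have hexp : Real.exp (Real.log c⁻¹) = c⁻¹ :=
    Real.exp_log (by positivity)
  have hs := Finset.sum_nonneg fun i (_ : i ∈ Finset.univ) => hterm i
  rw [Finset.sum_add_distrib, Finset.sum_sub_distrib, Finset.sum_sub_distrib,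
    ← Finset.sum_mul, hpsum, hexp] at hs
  simp only [Finset.sum_const, Finset.card_univ, nsmul_eq_mul] at hs
  have hcc : (Fintype.card ι : ℝ) * c⁻¹ = 1 := by
    rw [hc]; exact mul_inv_cancel₀ (ne_of_gt hcard)
  rw [hcc, Real.log_inv] at hs
  rw [vnEntropy_eq hH]
  linarith

end Aux

section Chan
variable {A B R F : Type*} [Fintype A] [Fintype B] [Fintype R] [Fintype F]
  [DecidableEq A] [DecidableEq B] [DecidableEq R] [DecidableEq F]

/-- The `(s,s')` slice of a matrix on a product space. -/
def slice (M : Matrix (A × R) (A × R) ℂ) (s s' : R) : Matrix A A ℂ :=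
  Matrix.of fun a a' => M (a, s) (a', s')

theorem extendId_apply (L : Matrix A A ℂ →ₗ[ℂ] Matrix B B ℂ)
    (M : Matrix (A × R) (A × R) ℂ) (b : B) (r : R) (b' : B) (r' : R) :
    extendId L M (b, r) (b', r') = L (slice M r r') b b' := rfl

theorem one_kron_mul_apply {C : Type*} [Fintype C] (X : Matrix R R ℂ)
    (M : Matrix (F × R) C ℂ) (a : F) (r : R) (c : C) :
    (((1 : Matrix F F ℂ) ⊗ₖ X) * M) (a, r) c = ∑ s, X r s * M (a, s) c := by
  rw [Matrix.mul_apply, Fintype.sum_prod_type,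
    show (∑ a' : F, ∑ s : R, ((1 : Matrix F F ℂ) ⊗ₖ X) (a, r) (a', s) * M (a', s) c)
      = ∑ s : R, ∑ a' : F, ((1 : Matrix F F ℂ) ⊗ₖ X) (a, r) (a', s) * M (a', s) c
      from Finset.sum_comm]
  refine Finset.sum_congr rfl fun s _ => ?_
  simp [Matrix.kroneckerMap_apply, Matrix.one_apply, ite_mul, zero_mul]

theorem mul_one_kron_apply {C : Type*} [Fintype C] (Y : Matrix R R ℂ)
    (M : Matrix C (F × R) ℂ) (c : C) (a : F) (r : R) :
    (M * ((1 : Matrix F F ℂ) ⊗ₖ Y)) c (a, r) = ∑ s, M c (a, s) * Y s r := by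
  rw [Matrix.mul_apply, Fintype.sum_prod_type,
    show (∑ a' : F, ∑ s : R, M c (a', s) * ((1 : Matrix F F ℂ) ⊗ₖ Y) (a', s) (a, r))
      = ∑ s : R, ∑ a' : F, M c (a', s) * ((1 : Matrix F F ℂ) ⊗ₖ Y) (a', s) (a, r)
      from Finset.sum_comm]
  refine Finset.sum_congr rfl fun s _ => ?_
  simp [Matrix.kroneckerMap_apply, Matrix.one_apply, mul_ite, mul_zero, mul_comm]

theorem slice_conj (X Y : Matrix R R ℂ) (M : Matrix (A × R) (A × R) ℂ) (r r' : R) :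
    slice (((1 : Matrix A A ℂ) ⊗ₖ X) * M * ((1 : Matrix A A ℂ) ⊗ₖ Y)) r r'
      = ∑ s, ∑ s', (X r s * Y s' r') • slice M s s' := by
  ext a a'
  show (((1 : Matrix A A ℂ) ⊗ₖ X) * M * ((1 : Matrix A A ℂ) ⊗ₖ Y)) (a, r) (a', r') = _
  rw [mul_one_kron_apply]
  have : ∀ s', (((1 : Matrix A A ℂ) ⊗ₖ X) * M) (a, r) (a', s')
      = ∑ s, X r s * M (a, s) (a', s') := fun s' => one_kron_mul_apply X M a r (a', s')
  rw [Finset.sum_congr rfl fun s' _ => by rw [this s']]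
  rw [show (∑ s' : R, (∑ s : R, X r s * M (a, s) (a', s')) * Y s' r')
      = ∑ s' : R, ∑ s : R, X r s * M (a, s) (a', s') * Y s' r' by
    refine Finset.sum_congr rfl fun s' _ => ?_; rw [Finset.sum_mul],
    show (∑ s' : R, ∑ s : R, X r s * M (a, s) (a', s') * Y s' r')
      = ∑ s : R, ∑ s' : R, X r s * M (a, s) (a', s') * Y s' r' from Finset.sum_comm]
  rw [Matrix.sum_apply]
  refine Finset.sum_congr rfl fun s _ => ?_
  rw [Matrix.sum_apply]
  refine Finset.sum_congr rfl fun s' _ => ?_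
  simp only [Matrix.smul_apply, slice, Matrix.of_apply, smul_eq_mul]
  ring

theorem extendId_conj (L : Matrix A A ℂ →ₗ[ℂ] Matrix B B ℂ) (X Y : Matrix R R ℂ)
    (M : Matrix (A × R) (A × R) ℂ) :
    extendId L (((1 : Matrix A A ℂ) ⊗ₖ X) * M * ((1 : Matrix A A ℂ) ⊗ₖ Y))
      = ((1 : Matrix B B ℂ) ⊗ₖ X) * extendId L M * ((1 : Matrix B B ℂ) ⊗ₖ Y) := by
  ext ⟨b, r⟩ ⟨b', r'⟩
  have lhs : extendId L (((1 : Matrix A A ℂ) ⊗ₖ X) * M * ((1 : Matrix A A ℂ) ⊗ₖ Y)) (b, r) (b', r')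
      = ∑ s : R, ∑ s' : R, X r s * Y s' r' * L (slice M s s') b b' := by
    rw [extendId_apply, slice_conj, map_sum, Matrix.sum_apply]
    refine Finset.sum_congr rfl fun s _ => ?_
    rw [map_sum, Matrix.sum_apply]
    refine Finset.sum_congr rfl fun s' _ => ?_
    rw [LinearMap.map_smul]
    simp only [Matrix.smul_apply, smul_eq_mul]
  have rhs : (((1 : Matrix B B ℂ) ⊗ₖ X) * extendId L M * ((1 : Matrix B B ℂ) ⊗ₖ Y)) (b, r) (b', r')
      = ∑ s : R, ∑ s' : R, X r s * Y s' r' * L (slice M s s') b b' := by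
    rw [mul_one_kron_apply]
    rw [Finset.sum_congr rfl fun s' (_ : s' ∈ Finset.univ) => by
      rw [one_kron_mul_apply X (extendId L M) b r (b', s')]]
    rw [Finset.sum_congr rfl fun s' (_ : s' ∈ Finset.univ) =>
      Finset.sum_mul (Finset.univ : Finset R)
        (fun s => X r s * extendId L M (b, s) (b', s')) (Y s' r')]
    rw [Finset.sum_comm]
    refine Finset.sum_congr rfl fun s _ => Finset.sum_congr rfl fun s' _ => ?_
    rw [extendId_apply]
    ring
  exact lhs.trans rhs.symm

theorem trace_extendId (L : Matrix A A ℂ →ₗ[ℂ] Matrix B B ℂ)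
    (hL : ∀ M, (L M).trace = M.trace) (M : Matrix (A × R) (A × R) ℂ) :
    (extendId L M).trace = M.trace := by
  have key : ∀ (r : R), ∑ b : B, extendId L M (b, r) (b, r) = ∑ a : A, M (a, r) (a, r) := by
    intro r
    have h1 : ∑ b : B, extendId L M (b, r) (b, r) = (L (slice M r r)).trace :=
      Finset.sum_congr rfl fun b _ => by rw [extendId_apply]; rfl
    rw [h1, hL]
    rfl
  rw [Matrix.trace, Matrix.trace, Fintype.sum_prod_type, Fintype.sum_prod_type]
  rw [show (∑ b : B, ∑ r : R, (extendId L M).diag (b, r))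
      = ∑ r : R, ∑ b : B, extendId L M (b, r) (b, r) from Finset.sum_comm]
  rw [show (∑ a : A, ∑ r : R, M.diag (a, r))
      = ∑ r : R, ∑ a : A, M (a, r) (a, r) from Finset.sum_comm]
  exact Finset.sum_congr rfl fun r _ => key r

theorem ptraceFst_extendId (L : Matrix A A ℂ →ₗ[ℂ] Matrix B B ℂ)
    (hL : ∀ M, (L M).trace = M.trace) (M : Matrix (A × R) (A × R) ℂ) :
    ptraceFst (extendId L M) = ptraceFst M := by
  ext r r'
  show ∑ b : B, extendId L M (b, r) (b, r') = ∑ a : A, M (a, r) (a, r')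
  have : ∑ b : B, extendId L M (b, r) (b, r') = (L (slice M r r')).trace := by
    rw [Matrix.trace]
    exact Finset.sum_congr rfl fun b _ => by rw [Matrix.diag_apply, extendId_apply]
  rw [this, hL]
  rfl

theorem ptraceFst_conj (X Y : Matrix R R ℂ) (M : Matrix (F × R) (F × R) ℂ) :
    ptraceFst (((1 : Matrix F F ℂ) ⊗ₖ X) * M * ((1 : Matrix F F ℂ) ⊗ₖ Y))
      = X * ptraceFst M * Y := by
  ext r r'
  show ∑ b : F, (((1 : Matrix F F ℂ) ⊗ₖ X) * M * ((1 : Matrix F F ℂ) ⊗ₖ Y)) (b, r) (b, r') = _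
  have h1 : ∀ b : F, (((1 : Matrix F F ℂ) ⊗ₖ X) * M * ((1 : Matrix F F ℂ) ⊗ₖ Y)) (b, r) (b, r')
      = ∑ s', (∑ s, X r s * M (b, s) (b, s')) * Y s' r' := by
    intro b
    rw [mul_one_kron_apply]
    exact Finset.sum_congr rfl fun s' _ => by rw [one_kron_mul_apply]
  rw [Finset.sum_congr rfl fun b _ => h1 b]
  rw [Matrix.mul_apply]
  have h2 : ∀ s', (X * ptraceFst M) r s' * Y s' r'
      = ∑ b : F, (∑ s, X r s * M (b, s) (b, s')) * Y s' r' := by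
    intro s'
    rw [Matrix.mul_apply, ← Finset.sum_mul]
    congr 1
    rw [show (∑ s : R, X r s * ptraceFst M s s') = ∑ s : R, ∑ b : F, X r s * M (b, s) (b, s') by
      refine Finset.sum_congr rfl fun s _ => ?_
      show X r s * ∑ b : F, M (b, s) (b, s') = _
      rw [Finset.mul_sum]]
    exact Finset.sum_comm
  rw [Finset.sum_congr rfl fun s' _ => h2 s']
  exact Finset.sum_comm

theorem ptraceFst_phi : ptraceFst (PhiMat A) = 1 := by
  ext r r'
  show ∑ a : A, PhiMat A (a, r) (a, r') = (1 : Matrix A A ℂ) r r'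
  simp only [PhiMat, Matrix.of_apply, Matrix.one_apply]
  by_cases h : r = r'
  · subst h
    rw [Finset.sum_congr rfl (fun a _ => if_congr (by tauto) rfl rfl :
      ∀ a ∈ Finset.univ, (if a = r ∧ a = r then (1:ℂ) else 0) = if a = r then 1 else 0)]
    simp
  · simp only [if_neg h]
    refine Finset.sum_eq_zero fun a _ => ?_
    rw [if_neg]
    rintro ⟨h1, h2⟩
    exact h (h1.symm.trans h2)

theorem trace_mul_one_kron (M : Matrix (F × R) (F × R) ℂ) (H : Matrix R R ℂ) :
    (M * ((1 : Matrix F F ℂ) ⊗ₖ H)).trace = (ptraceFst M * H).trace := by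
  rw [Matrix.trace, Matrix.trace, Fintype.sum_prod_type]
  rw [show (∑ b : F, ∑ r : R, (M * ((1 : Matrix F F ℂ) ⊗ₖ H)).diag (b, r))
      = ∑ r : R, ∑ b : F, (M * ((1 : Matrix F F ℂ) ⊗ₖ H)) (b, r) (b, r) from Finset.sum_comm]
  refine Finset.sum_congr rfl fun r _ => ?_
  rw [show ((ptraceFst M * H).diag r) = ∑ s, ptraceFst M r s * H s r from Matrix.mul_apply]
  rw [Finset.sum_congr rfl fun b (_ : b ∈ Finset.univ) => mul_one_kron_apply H M (b, r) b r]
  rw [Finset.sum_comm]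
  refine Finset.sum_congr rfl fun s _ => ?_
  show ∑ b : F, M (b, r) (b, s) * H s r = ptraceFst M r s * H s r
  rw [← Finset.sum_mul]
  rfl

theorem phi_posSemidef : (PhiMat A).PosSemidef := by
  rw [Matrix.posSemidef_iff_dotProduct_mulVec]
  constructor
  · ext ⟨a, r⟩ ⟨a', r'⟩
    simp only [Matrix.conjTranspose_apply, PhiMat, Matrix.of_apply]
    by_cases h : a' = r' ∧ a = r
    · rw [if_pos h, if_pos ⟨h.2, h.1⟩]; simp
    · rw [if_neg h, if_neg (by tauto)]; simp
  · intro x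
    set s : ℂ := ∑ b : A, x (b, b) with hs
    have hmv : ∀ p : A × A, (PhiMat A *ᵥ x) p = if p.1 = p.2 then s else 0 := by
      intro p
      rw [Matrix.mulVec, dotProduct]
      by_cases h : p.1 = p.2
      · rw [if_pos h]
        rw [show (∑ q : A × A, PhiMat A p q * x q)
            = ∑ q : A × A, (if q.1 = q.2 then x q else 0) from
          Finset.sum_congr rfl fun q _ => by
            simp only [PhiMat, Matrix.of_apply]
            by_cases h2 : q.1 = q.2
            · rw [if_pos ⟨h, h2⟩, if_pos h2, one_mul]
            · rw [if_neg (by tauto), if_neg h2, zero_mul]]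
        rw [hs, Fintype.sum_prod_type]
        refine Finset.sum_congr rfl fun b _ => ?_
        rw [show (∑ c : A, if (b, c).1 = (b, c).2 then x (b, c) else 0)
            = ∑ c : A, if b = c then x (b, c) else 0 from rfl]
        rw [Finset.sum_ite_eq Finset.univ b (fun c => x (b, c))]
        simp
      · rw [if_neg h]
        refine Finset.sum_eq_zero fun q _ => ?_
        simp only [PhiMat, Matrix.of_apply]
        rw [if_neg (by tauto), zero_mul]
    have hdot : dotProduct (star x) (PhiMat A *ᵥ x) = star s * s := by
      rw [dotProduct]
      have e1 : (∑ p : A × A, (star x) p * (PhiMat A *ᵥ x) p)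
          = ∑ p : A × A, (if p.1 = p.2 then star (x p) * s else 0) := by
        refine Finset.sum_congr rfl fun p _ => ?_
        rw [hmv p]
        by_cases h : p.1 = p.2
        · rw [if_pos h, if_pos h]; rfl
        · rw [if_neg h, if_neg h, mul_zero]
      rw [e1, Fintype.sum_prod_type]
      have e2 : ∀ b : A, (∑ c : A, if (b, c).1 = (b, c).2 then star (x (b, c)) * s else 0)
          = star (x (b, b)) * s := by
        intro b
        rw [show (∑ c : A, if (b, c).1 = (b, c).2 then star (x (b, c)) * s else 0)
            = ∑ c : A, if b = c then star (x (b, c)) * s else 0 from rfl]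
        rw [Finset.sum_ite_eq Finset.univ b (fun c => star (x (b, c)) * s)]
        simp
      rw [Finset.sum_congr rfl fun b (_ : b ∈ Finset.univ) => e2 b]
      rw [← Finset.sum_mul, hs]
      congr 1
      rw [star_sum]
    rw [hdot]
    have hns : star s * s = ((Complex.normSq s : ℝ) : ℂ) := by
      rw [mul_comm, ← Complex.mul_conj]
      rfl
    rw [hns]
    exact_mod_cast Complex.normSq_nonneg s

theorem choi_apply (L : Matrix A A ℂ →ₗ[ℂ] Matrix B B ℂ) (b : B) (x : A) (b' : B) (y : A) :
    choi L (b, x) (b', y) = L (Matrix.single x y 1) b b' := by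
  rw [choi, extendId_apply]
  have hsl : slice (PhiMat A) x y = Matrix.single x y 1 := by
    ext a a'
    simp only [slice, Matrix.of_apply, PhiMat, Matrix.single, Matrix.of_apply]
    by_cases h : a = x ∧ a' = y
    · rw [if_pos h, if_pos ⟨h.1.symm, h.2.symm⟩]
    · rw [if_neg h, if_neg (by tauto)]
  rw [hsl]

theorem choi_inj {N T : Matrix A A ℂ →ₗ[ℂ] Matrix B B ℂ} (h : choi N = choi T) :
    N = T := by
  have hbasis : ∀ x y : A, N (Matrix.single x y 1) = T (Matrix.single x y 1) := by
    intro x y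
    ext b b'
    rw [← choi_apply, ← choi_apply, h]
  refine LinearMap.ext fun M => ?_
  rw [Matrix.matrix_eq_sum_single M, map_sum, map_sum]
  refine Finset.sum_congr rfl fun x _ => ?_
  rw [map_sum, map_sum]
  refine Finset.sum_congr rfl fun y _ => ?_
  rw [show Matrix.single x y (M x y) = M x y • Matrix.single x y 1 by
    rw [Matrix.smul_single, smul_eq_mul, mul_one]]
  rw [LinearMap.map_smul, LinearMap.map_smul, hbasis]

theorem trace_ptraceFst (M : Matrix (F × R) (F × R) ℂ) :
    (ptraceFst M).trace = M.trace := by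
  rw [Matrix.trace, Matrix.trace, Fintype.sum_prod_type]
  rw [show (∑ b : F, ∑ r : R, M.diag (b, r))
      = ∑ r : R, ∑ b : F, M (b, r) (b, r) from Finset.sum_comm]
  rfl

theorem ptraceFst_posSemidef {M : Matrix (F × R) (F × R) ℂ} (hM : M.PosSemidef) :
    (ptraceFst M).PosSemidef := by
  rw [Matrix.posSemidef_iff_dotProduct_mulVec]
  constructor
  · ext r r'
    simp only [Matrix.conjTranspose_apply, ptraceFst, Matrix.of_apply, star_sum]
    refine Finset.sum_congr rfl fun b _ => ?_
    have := Matrix.ext_iff.mpr hM.1.eq (b, r) (b, r')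
    rw [← this]
    rfl
  · intro x
    have key : ∀ b : F, (0 : ℂ) ≤ dotProduct (star (fun p : F × R => if p.1 = b then x p.2 else 0))
        (M *ᵥ (fun p : F × R => if p.1 = b then x p.2 else 0)) := fun b => hM.dotProduct_mulVec_nonneg _
    have expand : ∀ b : F, dotProduct (star (fun p : F × R => if p.1 = b then x p.2 else 0))
        (M *ᵥ (fun p : F × R => if p.1 = b then x p.2 else 0))
        = ∑ r : R, ∑ r' : R, star (x r) * M (b, r) (b, r') * x r' := by
      intro b
      rw [dotProduct]
      rw [show (∑ p : F × R, (star fun p : F × R => if p.1 = b then x p.2 else 0) p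
            * (M *ᵥ fun p : F × R => if p.1 = b then x p.2 else 0) p)
          = ∑ p : F × R, (if p.1 = b then star (x p.2) else 0)
            * ∑ q : F × R, M p q * (if q.1 = b then x q.2 else 0) from
        Finset.sum_congr rfl fun p _ => by
          rw [Matrix.mulVec, dotProduct]
          congr 1
          · simp only [Pi.star_apply]
            by_cases h : p.1 = b
            · rw [if_pos h, if_pos h]
            · rw [if_neg h, if_neg h, star_zero]]
      rw [Fintype.sum_prod_type]
      rw [show (∑ b' : F, ∑ r : R, (if (b', r).1 = b then star (x r) else 0)
            * ∑ q : F × R, M (b', r) q * (if q.1 = b then x q.2 else 0))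
          = ∑ b' : F, (if b' = b then (∑ r : R,  star (x r)
            * ∑ q : F × R, M (b', r) q * (if q.1 = b then x q.2 else 0)) else 0) from
        Finset.sum_congr rfl fun b' _ => by
          by_cases h : b' = b
          · rw [if_pos h]
            exact Finset.sum_congr rfl fun r _ => by rw [if_pos h]
          · rw [if_neg h]
            exact Finset.sum_eq_zero fun r _ => by rw [if_neg h, zero_mul]]
      rw [Finset.sum_ite_eq' Finset.univ b]
      simp only [Finset.mem_univ, if_true]
      refine Finset.sum_congr rfl fun r _ => ?_
      rw [Fintype.sum_prod_type]
      rw [show (∑ b' : F, ∑ r' : R, M (b, r) (b', r') * (if (b', r').1 = b then x r' else 0))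
          = ∑ b' : F, (if b' = b then (∑ r' : R, M (b, r) (b', r') * x r') else 0) from
        Finset.sum_congr rfl fun b' _ => by
          by_cases h : b' = b
          · rw [if_pos h]
            exact Finset.sum_congr rfl fun r' _ => by rw [if_pos h]
          · rw [if_neg h]
            exact Finset.sum_eq_zero fun r' _ => by rw [if_neg h, mul_zero]]
      rw [Finset.sum_ite_eq' Finset.univ b]
      simp only [Finset.mem_univ, if_true]
      rw [Finset.mul_sum]
      refine Finset.sum_congr rfl fun r' _ => ?_
      ring
    have total : dotProduct (star x) (ptraceFst M *ᵥ x)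
        = ∑ b : F, ∑ r : R, ∑ r' : R, star (x r) * M (b, r) (b, r') * x r' := by
      rw [dotProduct]
      rw [show (∑ r : R, (star x) r * (ptraceFst M *ᵥ x) r)
          = ∑ r : R, ∑ r' : R, star (x r) * ptraceFst M r r' * x r' from
        Finset.sum_congr rfl fun r _ => by
          rw [Matrix.mulVec, dotProduct, Finset.mul_sum]
          exact Finset.sum_congr rfl fun r' _ => by
            simp only [Pi.star_apply]; ring]
      rw [show (∑ r : R, ∑ r' : R, star (x r) * ptraceFst M r r' * x r')
          = ∑ r : R, ∑ r' : R, ∑ b : F, star (x r) * M (b, r) (b, r') * x r' from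
        Finset.sum_congr rfl fun r _ => Finset.sum_congr rfl fun r' _ => by
          show (star (x r) * ∑ b : F, M (b, r) (b, r')) * x r' = _
          rw [Finset.mul_sum, Finset.sum_mul]]
      rw [show (∑ r : R, ∑ r' : R, ∑ b : F, star (x r) * M (b, r) (b, r') * x r')
          = ∑ r : R, ∑ b : F, ∑ r' : R, star (x r) * M (b, r) (b, r') * x r' from
        Finset.sum_congr rfl fun r _ => Finset.sum_comm]
      exact Finset.sum_comm
    rw [total]
    refine Finset.sum_nonneg fun b _ => ?_
    have := key b
    rw [expand b] at this
    exact this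

theorem kron_isHermitian {P : Matrix F F ℂ} {H : Matrix R R ℂ}
    (h1 : P.IsHermitian) (h2 : H.IsHermitian) : (P ⊗ₖ H).IsHermitian := by
  ext ⟨i, j⟩ ⟨k, l⟩
  simp only [Matrix.conjTranspose_apply, Matrix.kroneckerMap_apply, star_mul']
  rw [← Matrix.conjTranspose_apply P, ← Matrix.conjTranspose_apply H, h1.eq, h2.eq]

end Chan


/-- **Full-rank case: vanishing of the correction terms and uniqueness.**
If the minimizing state `φ_R` of a thermal channel `T` has full rank, then in
the canonical form of `J(T)` one has `S_{BR} = 0` and `Y_{BR} = 0`, and `T` is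
the unique optimizer of the maximum channel entropy problem. -/
theorem thermal_channel_full_rank_unique
    {dA dB J : ℕ}
    (C : Fin J → Matrix (Fin dB × Fin dA) (Fin dB × Fin dA) ℂ)
    (hC : ∀ j, (C j).IsHermitian) (q : Fin J → ℝ)
    (hfeas : ∃ N, Feasible C q N)
    (T : Mat dA →ₗ[ℂ] Mat dB)
    (hT : IsThermalChannel C q T)
    (φR : Mat dA) (hφR : IsDensity φR) (hφfull : φR.PosDef)
    (hφopt : condEntropy (extendId T (stateAR φR)) = channelEntropy T)
    (μ : Fin J → ℝ) (F : Mat dA)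
    (S Y : Matrix (Fin dB × Fin dA) (Fin dB × Fin dA) ℂ)
    (hF : F.IsHermitian)
    (hS : S.PosSemidef) (hSJ : S * choi T = 0)
    (hsupp : ((1 : Mat dB) ⊗ₖ ((1 : Mat dA) - suppProj φR)) *
        (∑ j, (μ j : ℂ) • C j - (1 : Mat dB) ⊗ₖ F - S) = 0)
    (hY : Y.IsHermitian)
    (hYP : ((1 : Mat dB) ⊗ₖ suppProj φR) * Y * ((1 : Mat dB) ⊗ₖ suppProj φR) = 0)
    (hform : choi T =
        ((1 : Mat dB) ⊗ₖ minvsqrt φR) *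
            expSupp ((1 : Mat dB) ⊗ₖ suppProj φR)
              (-(((1 : Mat dB) ⊗ₖ minvsqrt φR) *
                  (∑ j, (μ j : ℂ) • C j
                    - (1 : Mat dB) ⊗ₖ (F + xlogx φR) - S) *
                  ((1 : Mat dB) ⊗ₖ minvsqrt φR))) *
            ((1 : Mat dB) ⊗ₖ minvsqrt φR)
          + Y) :
    S = 0 ∧ Y = 0 ∧ ∀ N : Mat dA →ₗ[ℂ] Mat dB, IsThermalChannel C q N → N = T := by
  classical
  -- basic spectral data of `φR`
  have hφH : φR.IsHermitian := hφR.1.1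
  have hlam : ∀ i, 0 < hφH.eigenvalues i := fun i => hφfull.eigenvalues_pos i
  -- `suppProj φR = 1`
  have hsupp1 : suppProj φR = 1 := by
    refine udiag_one (mfun_udiag _ hφH) fun i => ?_
    simp only [if_neg (ne_of_gt (hlam i))]
  have hkron1 : ((1 : Mat dB) ⊗ₖ suppProj φR) = 1 := by
    rw [hsupp1, Matrix.one_kronecker_one]
  -- Y = 0
  have hY0 : Y = 0 := by
    have h := hYP
    rw [hkron1, Matrix.one_mul, Matrix.mul_one] at h
    exact h
  -- square roots
  set Q : Mat dA := msqrt φR with hQdef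
  set Qi : Mat dA := minvsqrt φR with hQidef
  have hQd : IsUdiag (hφH.eigenvectorUnitary : Mat dA)
      (fun i => Real.sqrt (hφH.eigenvalues i)) Q := mfun_udiag _ hφH
  have hQid : IsUdiag (hφH.eigenvectorUnitary : Mat dA)
      (fun i => if hφH.eigenvalues i = 0 then 0 else (Real.sqrt (hφH.eigenvalues i))⁻¹) Qi :=
    mfun_udiag _ hφH
  have hsq_pos : ∀ i, 0 < Real.sqrt (hφH.eigenvalues i) :=
    fun i => Real.sqrt_pos.mpr (hlam i)
  have hQQi : Q * Qi = 1 := by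
    refine udiag_one (udiag_mul hQd hQid) fun i => ?_
    simp only [if_neg (ne_of_gt (hlam i))]
    exact mul_inv_cancel₀ (ne_of_gt (hsq_pos i))
  have hQiQ : Qi * Q = 1 := by
    refine udiag_one (udiag_mul hQid hQd) fun i => ?_
    simp only [if_neg (ne_of_gt (hlam i))]
    exact inv_mul_cancel₀ (ne_of_gt (hsq_pos i))
  have hQQ : Q * Q = φR := by
    have h1 := (udiag_mul hQd hQd).2
    have h2 : (fun i => ((Real.sqrt (hφH.eigenvalues i) * Real.sqrt (hφH.eigenvalues i) : ℝ) : ℂ))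
        = fun i => ((hφH.eigenvalues i : ℝ) : ℂ) := by
      funext i
      rw [Real.mul_self_sqrt (hlam i).le]
    rw [h1]
    rw [show (Matrix.diagonal fun i =>
        (((fun i => Real.sqrt (hφH.eigenvalues i) * Real.sqrt (hφH.eigenvalues i)) i : ℝ) : ℂ))
      = Matrix.diagonal fun i => ((hφH.eigenvalues i : ℝ) : ℂ) by rw [show (fun i =>
        (((fun i => Real.sqrt (hφH.eigenvalues i) * Real.sqrt (hφH.eigenvalues i)) i : ℝ) : ℂ))
      = fun i => ((hφH.eigenvalues i : ℝ) : ℂ) from h2]]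
    exact (isUdiag_self hφH).2.symm
  set B₁ : Matrix (Fin dB × Fin dA) (Fin dB × Fin dA) ℂ := (1 : Mat dB) ⊗ₖ Q with hB₁def
  set Bi : Matrix (Fin dB × Fin dA) (Fin dB × Fin dA) ℂ := (1 : Mat dB) ⊗ₖ Qi with hBidef
  have hBBi : B₁ * Bi = 1 := by
    rw [hB₁def, hBidef, ← Matrix.mul_kronecker_mul, Matrix.one_mul, hQQi,
      Matrix.one_kronecker_one]
  have hBiB : Bi * B₁ = 1 := by
    rw [hB₁def, hBidef, ← Matrix.mul_kronecker_mul, Matrix.one_mul, hQiQ,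
      Matrix.one_kronecker_one]
  -- Hermitian structure
  have hQH : Q.IsHermitian := udiag_isHermitian hQd
  have hQiH : Qi.IsHermitian := udiag_isHermitian hQid
  have hxlogH : (xlogx φR).IsHermitian := udiag_isHermitian (mfun_udiag _ hφH)
  have hBiH : Bi.IsHermitian := kron_isHermitian Matrix.isHermitian_one hQiH
  have hB₁H : B₁.IsHermitian := kron_isHermitian Matrix.isHermitian_one hQH
  have hsumH : (∑ j, (μ j : ℂ) • C j).IsHermitian := by
    show (∑ j, (μ j : ℂ) • C j)ᴴ = ∑ j, (μ j : ℂ) • C j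
    rw [Matrix.conjTranspose_sum]
    refine Finset.sum_congr rfl fun j _ => ?_
    rw [Matrix.conjTranspose_smul, (hC j).eq, Complex.star_def, Complex.conj_ofReal]
  have hSH : S.IsHermitian := hS.1
  set G' : Matrix (Fin dB × Fin dA) (Fin dB × Fin dA) ℂ :=
    ∑ j, (μ j : ℂ) • C j - (1 : Mat dB) ⊗ₖ (F + xlogx φR) - S with hG'def
  have hG'H : G'.IsHermitian :=
    (hsumH.sub (kron_isHermitian Matrix.isHermitian_one (hF.add hxlogH))).sub hSH
  have hconjH : ∀ {Z : Matrix (Fin dB × Fin dA) (Fin dB × Fin dA) ℂ},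
      Z.IsHermitian → (Bi * Z * Bi).IsHermitian := by
    intro Z hZ
    have := Matrix.isHermitian_mul_mul_conjTranspose Bi hZ
    rwa [hBiH.eq] at this
  have hX'H : (-(Bi * G' * Bi)).IsHermitian := (hconjH hG'H).neg
  -- rewrite hform
  have hform' : choi T = Bi * mexp (-(Bi * G' * Bi)) * Bi := by
    rw [hform, hY0, add_zero, expSupp, hkron1, sub_self, sub_zero]
  -- `choi T` is invertible
  have hBi_unit : IsUnit Bi := by
    rw [Matrix.isUnit_iff_isUnit_det]
    refine IsUnit.of_mul_eq_one B₁.det ?_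
    rw [← Matrix.det_mul, hBiB, Matrix.det_one]
  have hσ'_unit : IsUnit (mexp (-(Bi * G' * Bi))) :=
    udiag_isUnit (mfun_udiag Real.exp hX'H) fun i => Real.exp_ne_zero _
  have hJunit : IsUnit (choi T) := by
    rw [hform']
    exact (hBi_unit.mul hσ'_unit).mul hBi_unit
  -- S = 0
  have hS0 : S = 0 := by
    obtain ⟨K, hK⟩ := hJunit.exists_right_inv
    calc S = S * (choi T * K) := by rw [hK, Matrix.mul_one]
      _ = S * choi T * K := by rw [Matrix.mul_assoc]
      _ = 0 := by rw [hSJ, Matrix.zero_mul]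
  -- the exponent with S removed
  set G : Matrix (Fin dB × Fin dA) (Fin dB × Fin dA) ℂ :=
    ∑ j, (μ j : ℂ) • C j - (1 : Mat dB) ⊗ₖ (F + xlogx φR) with hGdef
  have hGG' : G' = G := by rw [hG'def, hGdef, hS0, sub_zero]
  set X : Matrix (Fin dB × Fin dA) (Fin dB × Fin dA) ℂ := -(Bi * G * Bi) with hXdef
  have hXH : X.IsHermitian := by
    rw [hXdef, ← hGG']
    exact hX'H
  have hform'' : choi T = Bi * mexp X * Bi := by
    rw [hform', hGG']
  -- the state and its image
  have hstate_psd : (stateAR φR).PosSemidef := by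
    have h := (phi_posSemidef (A := Fin dA)).mul_mul_conjTranspose_same
      ((1 : Mat dA) ⊗ₖ Q)
    rwa [(kron_isHermitian Matrix.isHermitian_one hQH).eq] at h
  have hstate_tr : (stateAR φR).trace = 1 := by
    show (((1 : Mat dA) ⊗ₖ Q) * PhiMat (Fin dA) * ((1 : Mat dA) ⊗ₖ Q)).trace = 1
    rw [Matrix.trace_mul_comm, ← Matrix.mul_assoc, ← Matrix.mul_kronecker_mul,
      Matrix.one_mul, hQQ, Matrix.trace_mul_comm, trace_mul_one_kron,
      ptraceFst_phi, Matrix.one_mul, hφR.2]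
  have hstate : IsDensity (stateAR φR) := ⟨hstate_psd, hstate_tr⟩
  -- image of the state under a channel
  have himg_eq : ∀ (L : Mat dA →ₗ[ℂ] Mat dB),
      extendId L (stateAR φR) = B₁ * choi L * B₁ := by
    intro L
    show extendId L (((1 : Mat dA) ⊗ₖ Q) * PhiMat (Fin dA) * ((1 : Mat dA) ⊗ₖ Q)) = _
    rw [extendId_conj]
    rfl
  have himg_den : ∀ (L : Mat dA →ₗ[ℂ] Mat dB), IsChannel L →
      IsDensity (extendId L (stateAR φR)) := by
    intro L hL
    exact ⟨hL.1 dA (stateAR φR) hstate_psd,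
      (trace_extendId L hL.2 (stateAR φR)).trans hstate_tr⟩
  have hptr : ∀ (L : Mat dA →ₗ[ℂ] Mat dB), IsChannel L →
      ptraceFst (extendId L (stateAR φR)) = φR := by
    intro L hL
    rw [ptraceFst_extendId L hL.2]
    show ptraceFst (((1 : Mat dA) ⊗ₖ Q) * PhiMat (Fin dA) * ((1 : Mat dA) ⊗ₖ Q)) = φR
    rw [ptraceFst_conj, ptraceFst_phi, Matrix.mul_one, hQQ]
  have hcond : ∀ (L : Mat dA →ₗ[ℂ] Mat dB), IsChannel L →
      condEntropy (extendId L (stateAR φR))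
        = vnEntropy (extendId L (stateAR φR)) - vnEntropy φR := by
    intro L hL
    rw [condEntropy, hptr L hL]
  -- lower-boundedness of the entropy set
  have hBdd : ∀ (L : Mat dA →ₗ[ℂ] Mat dB), IsChannel L →
      BddBelow {x | ∃ ρ : Matrix (Fin dA × Fin dA) (Fin dA × Fin dA) ℂ,
        IsDensity ρ ∧ x = condEntropy (extendId L ρ)} := by
    intro L hL
    refine ⟨-Real.log dA, fun x hx => ?_⟩
    obtain ⟨ρ, hρ, rfl⟩ := hx
    have hτ : (extendId L ρ).PosSemidef := hL.1 dA ρ hρ.1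
    have hτt : (extendId L ρ).trace = 1 := (trace_extendId L hL.2 ρ).trans hρ.2
    have h1 : 0 ≤ vnEntropy (extendId L ρ) := vnEntropy_nonneg hτ hτt
    have hpt : (ptraceFst (extendId L ρ)).PosSemidef := ptraceFst_posSemidef hτ
    have hptt : (ptraceFst (extendId L ρ)).trace = 1 := (trace_ptraceFst _).trans hτt
    have h2 := vnEntropy_le_log hpt hptt
    rw [show (Fintype.card (Fin dA) : ℝ) = (dA : ℝ) by simp] at h2
    rw [condEntropy]
    linarith
  have hchE_le : ∀ (L : Mat dA →ₗ[ℂ] Mat dB), IsChannel L →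
      channelEntropy L ≤ condEntropy (extendId L (stateAR φR)) := by
    intro L hL
    exact csInf_le (hBdd L hL) ⟨stateAR φR, hstate, rfl⟩
  -- trace constant for feasible channels
  have htconst : ∀ (L : Mat dA →ₗ[ℂ] Mat dB), Feasible C q L →
      ((B₁ * choi L * B₁) * X).trace
        = -(∑ j, (μ j : ℂ) * (q j : ℂ)) + (F + xlogx φR).trace := by
    intro L hL
    have hcollapse : (B₁ * choi L * B₁) * (Bi * G * Bi) = B₁ * (choi L * (G * Bi)) := by
      simp only [Matrix.mul_assoc]
      rw [← Matrix.mul_assoc B₁ Bi (G * Bi), hBBi, Matrix.one_mul]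
    have htr1 : ((B₁ * choi L * B₁) * (Bi * G * Bi)).trace = (choi L * G).trace := by
      rw [hcollapse, Matrix.trace_mul_comm,
        Matrix.mul_assoc (choi L) (G * Bi) B₁, Matrix.mul_assoc G Bi B₁,
        hBiB, Matrix.mul_one]
    have hptrchoi : ptraceFst (choi L) = 1 := by
      rw [show choi L = extendId L (PhiMat (Fin dA)) from rfl,
        ptraceFst_extendId L hL.1.2, ptraceFst_phi]
    have h2a : (choi L * (∑ j, (μ j : ℂ) • C j)).trace = ∑ j, (μ j : ℂ) * (q j : ℂ) := by
      rw [Finset.mul_sum, Matrix.trace_sum]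
      refine Finset.sum_congr rfl fun j _ => ?_
      rw [Matrix.mul_smul, Matrix.trace_smul, Matrix.trace_mul_comm, hL.2 j, smul_eq_mul]
    have h2b : (choi L * ((1 : Mat dB) ⊗ₖ (F + xlogx φR))).trace = (F + xlogx φR).trace := by
      rw [trace_mul_one_kron, hptrchoi, Matrix.one_mul]
    have h2 : (choi L * G).trace
        = (∑ j, (μ j : ℂ) * (q j : ℂ)) - (F + xlogx φR).trace := by
      rw [hGdef, Matrix.mul_sub, Matrix.trace_sub, h2a, h2b]
    have h3 : ((B₁ * choi L * B₁) * X).trace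
        = -(((B₁ * choi L * B₁) * (Bi * G * Bi)).trace) := by
      rw [hXdef, Matrix.mul_neg, Matrix.trace_neg]
    rw [h3, htr1, h2]
    ring
  -- τT is the Gibbs state
  have hτT_mexp : extendId T (stateAR φR) = mexp X := by
    rw [himg_eq T, hform'']
    have h : B₁ * (Bi * mexp X * Bi) * B₁ = (B₁ * Bi) * (mexp X * (Bi * B₁)) := by
      simp only [Matrix.mul_assoc]
    rw [h, hBBi, hBiB, Matrix.mul_one, Matrix.one_mul]
  have hτTd : IsDensity (extendId T (stateAR φR)) := himg_den T hT.1.1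
  have hmexp_tr : (mexp X).trace = 1 := by rw [← hτT_mexp]; exact hτTd.2
  have hvT : vnEntropy (extendId T (stateAR φR)) = -((mexp X * X).trace.re) := by
    rw [hτT_mexp]; exact vnEntropy_mexp hXH
  refine ⟨hS0, hY0, ?_⟩
  -- uniqueness
  intro N hN
  have hNfeas : Feasible C q N := hN.1
  have hNchan : IsChannel N := hNfeas.1
  set τN := extendId N (stateAR φR) with hτNdef
  have hτN_eq : τN = B₁ * choi N * B₁ := himg_eq N
  have hτNd : IsDensity τN := himg_den N hNchan
  have hKlein := klein_ineq hτNd.1 hτNd.2 hXH hmexp_tr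
  -- the traces against X agree
  have hcN : (τN * X).trace = (extendId T (stateAR φR) * X).trace := by
    rw [hτN_eq, himg_eq T, htconst N hNfeas, htconst T hT.1]
  -- channel entropies agree
  have hchan_eq : channelEntropy N = channelEntropy T :=
    le_antisymm (hT.2 N hNfeas) (hN.2 T hT.1)
  have hle1 : channelEntropy N ≤ condEntropy τN := hchE_le N hNchan
  have hcondN : condEntropy τN = vnEntropy τN - vnEntropy φR := hcond N hNchan
  have hcondT : condEntropy (extendId T (stateAR φR))
      = vnEntropy (extendId T (stateAR φR)) - vnEntropy φR := hcond T hT.1.1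
  have hchainT : channelEntropy T = vnEntropy (extendId T (stateAR φR)) - vnEntropy φR := by
    rw [← hφopt, hcondT]
  have hge : vnEntropy (extendId T (stateAR φR)) ≤ vnEntropy τN := by
    have h1 : channelEntropy N ≤ vnEntropy τN - vnEntropy φR := by
      rw [← hcondN]; exact hle1
    rw [hchan_eq, hchainT] at h1
    linarith
  have hTXre : -((τN * X).trace.re) = vnEntropy (extendId T (stateAR φR)) := by
    rw [hvT, ← hτT_mexp, hcN]
  have heq : vnEntropy τN = -((τN * X).trace.re) := by
    have hle := hKlein.1
    rw [hTXre] at hle ⊢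
    linarith
  have hτNτT : τN = mexp X := hKlein.2 heq
  have hchoi_eq : choi N = choi T := by
    have hBB : B₁ * choi N * B₁ = B₁ * choi T * B₁ := by
      rw [← himg_eq N, ← himg_eq T, ← hτNdef, hτNτT, hτT_mexp]
    have cancel : ∀ Z : Matrix (Fin dB × Fin dA) (Fin dB × Fin dA) ℂ,
        Bi * (B₁ * Z * B₁) * Bi = Z := by
      intro Z
      have h : Bi * (B₁ * Z * B₁) * Bi = (Bi * B₁) * (Z * (B₁ * Bi)) := by
        simp only [Matrix.mul_assoc]
      rw [h, hBiB, hBBi, Matrix.mul_one, Matrix.one_mul]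
    calc choi N = Bi * (B₁ * choi N * B₁) * Bi := (cancel _).symm
      _ = Bi * (B₁ * choi T * B₁) * Bi := by rw [hBB]
      _ = choi T := cancel _
  exact choi_inj hchoi_eq

end ThermalChannel
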